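/- Let V be a configuration of n ≥ 4 vectors in R^3 in general position. Define f*_{4,t}(V) as the number of sign vectors in {-1,0,+1}^n arising from nontrivial linear dependencies of V with exactly 4 nonzero entries, of which exactly t are negative. Then f*_{4,0}(V) + f*_{4,1}(V) + (1/2) f*_{4,2}(V) = C(n,4). -/

import Mathlib

/-- The set of sign vectors of nontrivial linear dependencies of a configuration. -/
def depPatterns (n : ℕ) (V : Fin n → (Fin 3 → ℝ)) : Set (Fin n → ℝ) :=
  {σ | ∃ l : Fin n → ℝ, l ≠ 0 ∧ (∑ i, l i • V i) = 0 ∧ σ = fun i => Real.sign (l i)}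

/-- `fstar4 n V t` counts the dependency sign patterns of `V` with exactly 4 nonzero
entries, exactly `t` of which are negative. -/
noncomputable def fstar4 (n : ℕ) (V : Fin n → (Fin 3 → ℝ)) (t : ℕ) : ℕ :=
  Set.ncard {σ ∈ depPatterns n V |
    (Finset.univ.filter (fun i => σ i ≠ 0)).card = 4 ∧
    (Finset.univ.filter (fun i => σ i < 0)).card = t}

open Finset

section Aux

variable {n : ℕ} {V : Fin n → (Fin 3 → ℝ)}

lemma sign_mul_pos' {c x : ℝ} (hc : 0 < c) : Real.sign (c * x) = Real.sign x := by
  rcases lt_trichotomy x 0 with h | h | h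
  · rw [Real.sign_of_neg h, Real.sign_of_neg (mul_neg_of_pos_of_neg hc h)]
  · simp [h]
  · rw [Real.sign_of_pos h, Real.sign_of_pos (mul_pos hc h)]

lemma sign_mul_neg' {c x : ℝ} (hc : c < 0) : Real.sign (c * x) = -Real.sign x := by
  have h : c * x = -((-c) * x) := by ring
  rw [h, Real.sign_neg, sign_mul_pos' (neg_pos.mpr hc)]

lemma zero_of_small (hn : 3 ≤ n)
    (hgen : ∀ s : Finset (Fin n), s.card = 3 → LinearIndependent ℝ (fun i : s => V i))
    {l : Fin n → ℝ} (hl : (∑ i, l i • V i) = 0)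
    {s : Finset (Fin n)} (hsub : ∀ i, l i ≠ 0 → i ∈ s) (hcard : s.card ≤ 3) :
    l = 0 := by
  obtain ⟨t, hst, ht⟩ := Finset.exists_superset_card_eq hcard (by simp [hn])
  have hext : ∀ i, l i ≠ 0 → i ∈ t := fun i hi => hst (hsub i hi)
  have hsum : ∑ i : t, l (i : Fin n) • V (i : Fin n) = 0 := by
    rw [Finset.sum_coe_sort t (fun i => l i • V i)]
    rw [Finset.sum_subset (Finset.subset_univ t) ?_]
    · exact hl
    · intro x _ hx
      have hx0 : l x = 0 := by
        by_contra h
        exact hx (hext x h)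
      rw [hx0, zero_smul]
  have h0 := Fintype.linearIndependent_iff.mp (hgen t ht) (fun i : t => l i) hsum
  funext i
  by_contra h
  exact h (h0 ⟨i, hext i h⟩)

lemma exists_dep (hn : 4 ≤ n)
    (hgen : ∀ s : Finset (Fin n), s.card = 3 → LinearIndependent ℝ (fun i : s => V i))
    {S : Finset (Fin n)} (hS : S.card = 4) :
    ∃ l : Fin n → ℝ, (∑ i, l i • V i) = 0 ∧ ∀ i, (l i ≠ 0 ↔ i ∈ S) := by
  classical
  have hnotli : ¬ LinearIndependent ℝ (fun i : S => V i) := by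
    intro h
    have h2 := h.fintype_card_le_finrank
    rw [Fintype.card_coe, hS, Module.finrank_fin_fun] at h2
    omega
  obtain ⟨g, hgsum, j, hj⟩ := Fintype.not_linearIndependent_iff.mp hnotli
  set l : Fin n → ℝ := fun i => if h : i ∈ S then g ⟨i, h⟩ else 0 with hldef
  have hsupp : ∀ i, l i ≠ 0 → i ∈ S := by
    intro i hi
    by_contra h
    exact hi (dif_neg h)
  have hsum : ∑ i, l i • V i = 0 := by
    rw [← Finset.sum_subset (Finset.subset_univ S)
      (by intro x _ hx; rw [hldef]; simp [dif_neg hx])]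
    rw [← Finset.sum_coe_sort S (fun i => l i • V i)]
    rw [← hgsum]
    apply Finset.sum_congr rfl
    intro i _
    rw [hldef]
    simp
  refine ⟨l, hsum, fun i => ⟨hsupp i, fun hi => ?_⟩⟩
  by_contra h0
  have hz : l = 0 := by
    refine zero_of_small (by omega) hgen hsum (s := S.erase i) ?_ ?_
    · intro k hk
      refine Finset.mem_erase.mpr ⟨?_, hsupp k hk⟩
      rintro rfl
      exact hk h0
    · exact le_of_eq (by rw [Finset.card_erase_of_mem hi, hS])
  apply hj
  have h3 := congrFun hz (j : Fin n)
  simpa [hldef] using h3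

lemma dep_unique (hn : 4 ≤ n)
    (hgen : ∀ s : Finset (Fin n), s.card = 3 → LinearIndependent ℝ (fun i : s => V i))
    {S : Finset (Fin n)} (hS : S.card = 4)
    {l₀ : Fin n → ℝ} (h₀sum : (∑ i, l₀ i • V i) = 0) (h₀ : ∀ i, (l₀ i ≠ 0 ↔ i ∈ S))
    {l : Fin n → ℝ} (hlsum : (∑ i, l i • V i) = 0) (hsupp : ∀ i, l i ≠ 0 → i ∈ S) :
    ∃ c : ℝ, l = c • l₀ := by
  obtain ⟨j, hj⟩ := Finset.card_pos.mp (by rw [hS]; norm_num)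
  set c : ℝ := l j / l₀ j with hcdef
  refine ⟨c, ?_⟩
  have h₀j : l₀ j ≠ 0 := (h₀ j).mpr hj
  have hsum2 : ∑ i, (l - c • l₀) i • V i = 0 := by
    have h4 : ∑ i, (l - c • l₀) i • V i
        = (∑ i, l i • V i) - c • (∑ i, l₀ i • V i) := by
      rw [Finset.smul_sum, ← Finset.sum_sub_distrib]
      apply Finset.sum_congr rfl
      intro i _
      simp [sub_smul, smul_smul]
    rw [h4, hlsum, h₀sum, smul_zero, sub_zero]
  have hsub2 : ∀ k, (l - c • l₀) k ≠ 0 → k ∈ S.erase j := by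
    intro k hk
    refine Finset.mem_erase.mpr ⟨?_, ?_⟩
    · rintro rfl
      apply hk
      simp [hcdef, div_mul_cancel₀ (l k) h₀j]
    · by_contra hkS
      apply hk
      have h1 : l k = 0 := by
        by_contra h
        exact hkS (hsupp k h)
      have h2 : l₀ k = 0 := by
        by_contra h
        exact hkS ((h₀ k).mp h)
      simp [h1, h2]
  have key := zero_of_small (by omega) hgen hsum2 hsub2
    (le_of_eq (by rw [Finset.card_erase_of_mem hj, hS]))
  exact sub_eq_zero.mp key

lemma pattern_cases {σ : Fin n → ℝ} (h : σ ∈ depPatterns n V) (i : Fin n) :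
    σ i = -1 ∨ σ i = 0 ∨ σ i = 1 := by
  obtain ⟨l, -, -, rfl⟩ := h
  exact Real.sign_apply_eq (l i)

lemma neg_mem_dep {σ : Fin n → ℝ} (h : σ ∈ depPatterns n V) : -σ ∈ depPatterns n V := by
  obtain ⟨l, hl0, hlsum, rfl⟩ := h
  refine ⟨-l, by simpa using hl0, ?_, ?_⟩
  · simp only [Pi.neg_apply, neg_smul, Finset.sum_neg_distrib, hlsum, neg_zero]
  · funext i
    simp [Real.sign_neg]

lemma neg_filter_ne (σ : Fin n → ℝ) :
    (univ.filter fun i => (-σ) i ≠ 0) = (univ.filter fun i => σ i ≠ 0) := by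
  apply Finset.filter_congr
  intro i _
  simp

lemma neg_filter_lt (σ : Fin n → ℝ) :
    (univ.filter fun i => (-σ) i < 0) = (univ.filter fun i => 0 < σ i) := by
  apply Finset.filter_congr
  intro i _
  simp

lemma neg_add_pos_card (σ : Fin n → ℝ) :
    (univ.filter fun i => σ i < 0).card + (univ.filter fun i => 0 < σ i).card
      = (univ.filter fun i => σ i ≠ 0).card := by
  classical
  have hu : (univ.filter fun i => σ i ≠ 0)
      = (univ.filter fun i => σ i < 0) ∪ (univ.filter fun i => 0 < σ i) := by
    rw [← Finset.filter_or]
    apply Finset.filter_congr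
    intro i _
    simp [lt_or_lt_iff_ne, eq_comm]
  rw [hu, Finset.card_union_of_disjoint]
  rw [Finset.disjoint_filter]
  intro i _ h1 h2
  exact absurd h1 (asymm h2)

lemma fiber_pair (hn : 4 ≤ n)
    (hgen : ∀ s : Finset (Fin n), s.card = 3 → LinearIndependent ℝ (fun i : s => V i))
    {S : Finset (Fin n)} (hS : S.card = 4) :
    ∃ σ₀ : Fin n → ℝ,
      σ₀ ∈ depPatterns n V ∧ -σ₀ ∈ depPatterns n V ∧ σ₀ ≠ -σ₀ ∧
      (univ.filter fun i => σ₀ i ≠ 0) = S ∧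
      ∀ σ ∈ depPatterns n V, (univ.filter fun i => σ i ≠ 0) = S → σ = σ₀ ∨ σ = -σ₀ := by
  obtain ⟨l₀, hsum, h₀⟩ := exists_dep hn hgen hS
  obtain ⟨j, hj⟩ := Finset.card_pos.mp (by rw [hS]; norm_num)
  have hl₀ : l₀ ≠ 0 := fun h => ((h₀ j).mpr hj) (by rw [h]; rfl)
  have hmem : (fun i => Real.sign (l₀ i)) ∈ depPatterns n V := ⟨l₀, hl₀, hsum, rfl⟩
  refine ⟨fun i => Real.sign (l₀ i), hmem, neg_mem_dep hmem, ?_, ?_, ?_⟩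
  · intro h
    have h2 := congrFun h j
    rw [Pi.neg_apply] at h2
    have h0 : Real.sign (l₀ j) = 0 := by linarith
    exact ((h₀ j).mpr hj) (Real.sign_eq_zero_iff.mp h0)
  · ext i
    simp only [mem_filter, mem_univ, true_and, ne_eq, Real.sign_eq_zero_iff]
    exact h₀ i
  · intro σ hσ hfil
    obtain ⟨l, hl0, hlsum, rfl⟩ := hσ
    have hsupp : ∀ i, l i ≠ 0 → i ∈ S := by
      intro i hi
      rw [← hfil]
      simp [Real.sign_eq_zero_iff, hi]
    obtain ⟨c, rfl⟩ := dep_unique hn hgen hS hsum h₀ hlsum hsupp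
    have hc : c ≠ 0 := by
      rintro rfl
      apply hl0
      simp
    rcases hc.lt_or_gt with h | h
    · right
      funext i
      simp only [Pi.neg_apply, Pi.smul_apply, smul_eq_mul]
      exact sign_mul_neg' h
    · left
      funext i
      simp only [Pi.smul_apply, smul_eq_mul]
      exact sign_mul_pos' h

end Aux

theorem stmt_6 (n : ℕ) (hn : 4 ≤ n) (V : Fin n → (Fin 3 → ℝ))
    (hgen : ∀ s : Finset (Fin n), s.card = 3 →
      LinearIndependent ℝ (fun i : s => V i)) :
    (fstar4 n V 0 : ℚ) + (fstar4 n V 1 : ℚ) + 1/2 * (fstar4 n V 2 : ℚ) =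
      (n.choose 4 : ℚ) := by
  classical
  set T : Set (Fin n → ℝ) :=
    {σ | σ ∈ depPatterns n V ∧ (Finset.univ.filter (fun i => σ i ≠ 0)).card = 4} with hT
  have hTfin : T.Finite := by
    have hsub : T ⊆ Set.pi Set.univ (fun _ : Fin n => ({-1, 0, 1} : Set ℝ)) := by
      intro σ hσ i _
      rcases pattern_cases hσ.1 i with h | h | h <;> simp [h]
    exact Set.Finite.subset (Set.Finite.pi fun i => Set.toFinite _) hsub
  set F : Finset (Fin n → ℝ) := hTfin.toFinset with hF
  set a : ℕ → ℕ :=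
    fun t => (F.filter fun σ => (Finset.univ.filter fun i => σ i < 0).card = t).card with ha
  have hmemF : ∀ σ, σ ∈ F ↔
      σ ∈ depPatterns n V ∧ (Finset.univ.filter fun i => σ i ≠ 0).card = 4 := by
    intro σ
    rw [hF, Set.Finite.mem_toFinset]
    rfl
  have hfstar : ∀ t, fstar4 n V t = a t := by
    intro t
    have hseteq : {σ ∈ depPatterns n V |
        (Finset.univ.filter (fun i => σ i ≠ 0)).card = 4 ∧
        (Finset.univ.filter (fun i => σ i < 0)).card = t}
        = ↑(F.filter fun σ => (Finset.univ.filter fun i => σ i < 0).card = t) := by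
      ext σ
      simp only [Set.mem_setOf_eq, Finset.coe_filter, hmemF]
      tauto
    rw [fstar4, hseteq, Set.ncard_coe_finset]
  have cardfiber : ∀ S ∈ Finset.powersetCard 4 (univ : Finset (Fin n)),
      (F.filter fun σ => (Finset.univ.filter fun i => σ i ≠ 0) = S).card = 2 := by
    intro S hSmem
    have hS : S.card = 4 := Finset.mem_powersetCard_univ.mp hSmem
    obtain ⟨σ₀, hmem, hmemneg, hne, hfil, huniq⟩ := fiber_pair hn hgen hS
    have heq : F.filter (fun σ => (Finset.univ.filter fun i => σ i ≠ 0) = S)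
        = {σ₀, -σ₀} := by
      ext σ
      simp only [Finset.mem_filter, Finset.mem_insert, Finset.mem_singleton, hmemF]
      constructor
      · rintro ⟨⟨hdep, -⟩, hfils⟩
        exact huniq σ hdep hfils
      · rintro (rfl | rfl)
        · exact ⟨⟨hmem, by rw [hfil, hS]⟩, hfil⟩
        · have h2 := neg_filter_ne σ₀
          rw [hfil] at h2
          exact ⟨⟨hmemneg, by rw [h2, hS]⟩, h2⟩
    rw [heq, Finset.card_pair hne]
  have hcount1 : F.card = 2 * n.choose 4 := by
    rw [Finset.card_eq_sum_card_fiberwise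
      (f := fun σ => Finset.univ.filter fun i => σ i ≠ 0)
      (t := Finset.powersetCard 4 (univ : Finset (Fin n)))
      (fun σ hσ => Finset.mem_powersetCard_univ.mpr ((hmemF σ).mp hσ).2)]
    rw [Finset.sum_congr rfl cardfiber, Finset.sum_const, smul_eq_mul,
      Finset.card_powersetCard, Finset.card_univ, Fintype.card_fin, mul_comm]
  have hcount2 : F.card = ∑ t ∈ Finset.range 5, a t := by
    apply Finset.card_eq_sum_card_fiberwise
    intro σ hσ
    simp only [Finset.coe_range, Set.mem_Iio]
    have h1 := neg_add_pos_card σ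
    rw [((hmemF σ).mp hσ).2] at h1
    omega
  have hnegF : ∀ σ ∈ F, -σ ∈ F := by
    intro σ hσ
    rw [hmemF] at hσ ⊢
    exact ⟨neg_mem_dep hσ.1, by rw [neg_filter_ne, hσ.2]⟩
  have hnegstat : ∀ σ ∈ F, (Finset.univ.filter fun i => (-σ) i < 0).card
      = 4 - (Finset.univ.filter fun i => σ i < 0).card := by
    intro σ hσ
    have h1 := neg_add_pos_card σ
    rw [((hmemF σ).mp hσ).2] at h1
    rw [neg_filter_lt]
    omega
  have hsymm : ∀ t ≤ 4, a t = a (4 - t) := by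
    intro t ht
    show (F.filter fun σ => (Finset.univ.filter fun i => σ i < 0).card = t).card
       = (F.filter fun σ => (Finset.univ.filter fun i => σ i < 0).card = (4 - t)).card
    rw [← Finset.card_image_of_injective
      (F.filter fun σ => (Finset.univ.filter fun i => σ i < 0).card = t) neg_injective]
    congr 1
    ext τ
    simp only [Finset.mem_image, Finset.mem_filter]
    constructor
    · rintro ⟨σ, ⟨hσF, hσt⟩, rfl⟩
      exact ⟨hnegF σ hσF, by rw [hnegstat σ hσF, hσt]⟩
    · rintro ⟨hτF, hτt⟩
      refine ⟨-τ, ⟨hnegF τ hτF, ?_⟩, neg_neg τ⟩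
      rw [hnegstat τ hτF, hτt]
      omega
  have hsum5 : a 0 + a 1 + a 2 + a 3 + a 4 = 2 * n.choose 4 := by
    have h5 := hcount2
    rw [hcount1] at h5
    simp [Finset.sum_range_succ] at h5
    omega
  have h40 : a 0 = a 4 := hsymm 0 (by norm_num)
  have h31 : a 1 = a 3 := hsymm 1 (by norm_num)
  have key : 2 * a 0 + 2 * a 1 + a 2 = 2 * n.choose 4 := by omega
  rw [hfstar 0, hfstar 1, hfstar 2]
  have hq := congrArg (fun k : ℕ => (k : ℚ)) key
  push_cast at hq
  linarith
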